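/- False Extension 2 is false: there is an infeasible multi-item reduced form (three i.i.d. unit-demand bidders, three items; types A with probability ε and B with probability 1−ε; π_1(A)=π_2(A)=1/2, π_3(A)=0, π_j(B)=0 for all j) such that for every choice of item-independent weights W_i(A), W_i(B) ≥ 0 (W_{ij}(t) = W_i(t) for all items j), the weighted Border inequality Σ_{i,j,t} W_i(t)π_j(t)Pr[t_i=t] ≤ Σ_P Pr[P]·max_{φ(P)∈F} Σ_{i,j} W_i(P_i)φ_{ij}(P) holds; hence constricting weights must depend on the item. -/

import Mathlib

/- Three i.i.d. unit-demand bidders, three items.  Each bidder has type A (`true`) with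
probability ε and type B (`false`) with probability 1 − ε. -/

/-- The type distribution: `Pr[A] = ε`, `Pr[B] = 1 − ε`. -/
noncomputable def muE (ε : ℝ) : Bool → ℝ := fun t => if t then ε else 1 - ε

/-- The symmetric reduced form: `π_1(A) = π_2(A) = 1/2`, `π_3(A) = 0`, `π_j(B) = 0`. -/
noncomputable def piE3 : Fin 3 → Bool → ℝ :=
  fun j t => if j = 2 then 0 else if t then 1/2 else 0

/-- The feasible allocations: each item to at most one bidder, each (unit-demand)
bidder at most one item. -/
def F3 : Set (Fin 3 → Fin 3 → ℝ) :=
  {φ | (∀ i j, 0 ≤ φ i j) ∧ (∀ i, ∑ j, φ i j ≤ 1) ∧ (∀ j, ∑ i, φ i j ≤ 1)}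

def e3 : Bool × Bool × Bool ≃ (Fin 3 → Bool) where
  toFun p := ![p.1, p.2.1, p.2.2]
  invFun f := (f 0, f 1, f 2)
  left_inv p := rfl
  right_inv f := by funext i; fin_cases i <;> rfl

lemma sum_expand (g : (Fin 3 → Bool) → ℝ) :
    ∑ P : Fin 3 → Bool, g P =
      g ![true,true,true] + g ![true,true,false] + g ![true,false,true] + g ![true,false,false]
      + g ![false,true,true] + g ![false,true,false] + g ![false,false,true] + g ![false,false,false] := by
  rw [← Fintype.sum_equiv e3 (fun p => g (e3 p)) g (fun _ => rfl)]
  simp [Fintype.sum_prod_type, e3, Equiv.coe_fn_mk]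
  simp only [add_assoc]; rfl

lemma sup_ge3 (v : Fin 3 → ℝ) (hv : ∀ i, 0 ≤ v i) :
    (∑ i, v i) ≤ sSup ((fun φ => ∑ i : Fin 3, ∑ j : Fin 3, v i * φ i j) '' F3) := by
  apply le_csSup
  · refine ⟨∑ i, v i, ?_⟩
    rintro x ⟨φ, ⟨hp, hr, hc⟩, rfl⟩
    calc ∑ i : Fin 3, ∑ j : Fin 3, v i * φ i j = ∑ i : Fin 3, v i * ∑ j, φ i j := by
          simp [Finset.mul_sum]
    _ ≤ ∑ i : Fin 3, v i * 1 :=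
          Finset.sum_le_sum fun i _ => mul_le_mul_of_nonneg_left (hr i) (hv i)
    _ = ∑ i, v i := by simp
  · refine ⟨fun i j => if i = j then (1:ℝ) else 0, ⟨?_, ?_, ?_⟩, ?_⟩
    · intro i j; dsimp only; split <;> norm_num
    · intro i; simp
    · intro j; simp
    · simp [mul_ite]

set_option maxHeartbeats 2000000 in
/-- False Extension 2 is false: the reduced form above is infeasible, yet for every
choice of item-independent non-negative weights `W_i(t)` (`W_{ij}(t) = W_i(t)` for all
items `j`), the weighted Border inequality holds; hence constricting weights must
depend on the item. -/
theorem stmt_16 (ε : ℝ) (hε : 0 < ε) (hε' : ε < 1) :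
    -- the reduced form is infeasible:
    (¬ ∃ φ : (Fin 3 → Bool) → Fin 3 → Fin 3 → ℝ,
        (∀ P i j, 0 ≤ φ P i j) ∧
        (∀ P (j : Fin 3), ∑ i, φ P i j ≤ 1) ∧
        (∀ P (i : Fin 3), ∑ j, φ P i j ≤ 1) ∧
        (∀ (i : Fin 3) (t : Bool) (j : Fin 3),
          (∑ P : Fin 3 → Bool,
            if P i = t then (∏ l ∈ Finset.univ.erase i, muE ε (P l)) * φ P i j else 0)
          = piE3 j t)) ∧
    -- yet every item-independent choice of non-negative weights satisfies the
    -- weighted Border inequality: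
    (∀ W : Fin 3 → Bool → ℝ, (∀ i t, 0 ≤ W i t) →
      ∑ i : Fin 3, ∑ j : Fin 3, ∑ t : Bool, W i t * piE3 j t * muE ε t
        ≤ ∑ P : Fin 3 → Bool, (∏ i, muE ε (P i)) *
            sSup ((fun φ => ∑ i : Fin 3, ∑ j : Fin 3, W i (P i) * φ i j) '' F3)) := by
  have hμpos : ∀ t, 0 ≤ muE ε t := by intro t; cases t <;> simp [muE] <;> linarith
  constructor
  · rintro ⟨φ, hpos, hitem, hbid, hinterim⟩
    -- per-bidder key equation
    have key : ∀ i : Fin 3,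
        ∑ P : Fin 3 → Bool,
          (if P i = true then (∏ l, muE ε (P l)) * (φ P i 0 + φ P i 1) else 0) = ε := by
      intro i
      have h0 := hinterim i true 0
      have h1 := hinterim i true 1
      have hsum : (∑ P : Fin 3 → Bool,
          if P i = true then (∏ l ∈ Finset.univ.erase i, muE ε (P l)) * (φ P i 0 + φ P i 1) else 0)
          = 1 := by
        rw [show (1:ℝ) = piE3 0 true + piE3 1 true by norm_num [piE3, Fin.ext_iff], ← h0, ← h1,
          ← Finset.sum_add_distrib]
        congr 1; funext P
        by_cases h : P i = true <;> simp [h]; ring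
      calc ∑ P : Fin 3 → Bool,
          (if P i = true then (∏ l, muE ε (P l)) * (φ P i 0 + φ P i 1) else 0)
          = ∑ P : Fin 3 → Bool,
          ε * (if P i = true then (∏ l ∈ Finset.univ.erase i, muE ε (P l)) * (φ P i 0 + φ P i 1) else 0) := by
            congr 1; funext P
            by_cases h : P i = true
            · simp only [h, if_pos]
              rw [← Finset.mul_prod_erase Finset.univ _ (Finset.mem_univ i), h]
              simp [muE]; ring
            · simp [h]
        _ = ε := by rw [← Finset.mul_sum, hsum, mul_one]
    -- sum over i
    have hbig : ∑ P : Fin 3 → Bool, (∑ i : Fin 3,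
        (if P i = true then (∏ l, muE ε (P l)) * (φ P i 0 + φ P i 1) else 0)) = 3 * ε := by
      rw [Finset.sum_comm]
      rw [Fin.sum_univ_three, key 0, key 1, key 2]; ring
    rw [sum_expand] at hbig
    -- bounds: each A-bidder gets at most 1
    have hone : ∀ P i, φ P i 0 + φ P i 1 ≤ 1 := by
      intro P i
      have := hbid P i
      rw [Fin.sum_univ_three] at this
      have := hpos P i 2
      linarith
    have hone' : ∀ P i, 0 ≤ φ P i 0 + φ P i 1 := fun P i =>
      add_nonneg (hpos P i 0) (hpos P i 1)
    -- all-true profile: at most 2 items total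
    have htwo : (φ ![true,true,true] 0 0 + φ ![true,true,true] 0 1)
        + (φ ![true,true,true] 1 0 + φ ![true,true,true] 1 1)
        + (φ ![true,true,true] 2 0 + φ ![true,true,true] 2 1) ≤ 2 := by
      have h0 := hitem ![true,true,true] 0
      have h1 := hitem ![true,true,true] 1
      rw [Fin.sum_univ_three] at h0 h1
      linarith
    norm_num [Fin.sum_univ_three, Matrix.cons_val_zero, Matrix.cons_val_one, Matrix.head_cons, Matrix.cons_val_two, Matrix.tail_cons,
      Fin.prod_univ_three, muE] at hbig
    -- now hbig is a fully explicit 8-profile equation; derive contradiction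
    have hε3 : 0 < ε^3 := pow_pos hε 3
    have c3 : (0:ℝ) ≤ ε*ε*ε := by positivity
    have c2a : (0:ℝ) ≤ ε*ε*(1-ε) := by nlinarith
    have c2b : (0:ℝ) ≤ ε*(1-ε)*ε := by nlinarith
    have c2c : (0:ℝ) ≤ (1-ε)*ε*ε := by nlinarith
    have c1a : (0:ℝ) ≤ ε*(1-ε)*(1-ε) := by nlinarith
    have c1b : (0:ℝ) ≤ (1-ε)*ε*(1-ε) := by nlinarith
    have c1c : (0:ℝ) ≤ (1-ε)*(1-ε)*ε := by nlinarith
    have B0 : ε*ε*ε*((φ ![true,true,true] 0 0 + φ ![true,true,true] 0 1)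
        + (φ ![true,true,true] 1 0 + φ ![true,true,true] 1 1)
        + (φ ![true,true,true] 2 0 + φ ![true,true,true] 2 1)) ≤ ε*ε*ε*2 :=
      mul_le_mul_of_nonneg_left htwo c3
    have B1 := mul_le_mul_of_nonneg_left (hone ![true,true,false] 0) c2a
    have B2 := mul_le_mul_of_nonneg_left (hone ![true,true,false] 1) c2a
    have B3 := mul_le_mul_of_nonneg_left (hone ![true,false,true] 0) c2b
    have B4 := mul_le_mul_of_nonneg_left (hone ![true,false,true] 2) c2b
    have B5 := mul_le_mul_of_nonneg_left (hone ![false,true,true] 1) c2c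
    have B6 := mul_le_mul_of_nonneg_left (hone ![false,true,true] 2) c2c
    have B7 := mul_le_mul_of_nonneg_left (hone ![true,false,false] 0) c1a
    have B8 := mul_le_mul_of_nonneg_left (hone ![false,true,false] 1) c1b
    have B9 := mul_le_mul_of_nonneg_left (hone ![false,false,true] 2) c1c
    linarith [hbig, B0, B1, B2, B3, B4, B5, B6, B7, B8, B9, hε3]
  · intro W hW
    have hterm : ∀ P : Fin 3 → Bool,
        (∏ i, muE ε (P i)) * (∑ i, W i (P i)) ≤ (∏ i, muE ε (P i)) *
          sSup ((fun φ => ∑ i : Fin 3, ∑ j : Fin 3, W i (P i) * φ i j) '' F3) := by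
      intro P
      exact mul_le_mul_of_nonneg_left (sup_ge3 (fun i => W i (P i)) (fun i => hW i (P i)))
        (Finset.prod_nonneg fun l _ => hμpos (P l))
    have hlow : ∑ P : Fin 3 → Bool, (∏ i, muE ε (P i)) * (∑ i, W i (P i)) ≤
        ∑ P : Fin 3 → Bool, (∏ i, muE ε (P i)) *
          sSup ((fun φ => ∑ i : Fin 3, ∑ j : Fin 3, W i (P i) * φ i j) '' F3) :=
      Finset.sum_le_sum fun P _ => hterm P
    refine le_trans ?_ hlow
    rw [sum_expand (fun P => (∏ i, muE ε (P i)) * (∑ i, W i (P i)))]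
    simp only [Fin.sum_univ_three, Fintype.sum_bool, Fin.prod_univ_three,
      Matrix.cons_val_zero, Matrix.cons_val_one, Matrix.head_cons, Matrix.cons_val_two, Matrix.tail_cons,
      piE3, muE, show (0:Fin 3) ≠ 2 by decide, show (1:Fin 3) ≠ 2 by decide]
    norm_num
    nlinarith [mul_nonneg (sub_nonneg.2 hε'.le) (hW 0 false),
      mul_nonneg (sub_nonneg.2 hε'.le) (hW 1 false),
      mul_nonneg (sub_nonneg.2 hε'.le) (hW 2 false)]
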